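/- Let $\{F_n\}$, $\{G_n\}$, $\{H_n\}$ be sequences of functions on $\{0,\dots,n\}$ with $F_n(k)=G_n(k)+H_n(k)F_n(k-1)$ and $F_n(0)=\mu$. Define $f_n(x)=F_n(\lfloor nx\rfloor)$, $h_n(x)=n(1-H_n(\lfloor nx\rfloor))$, $g_n(x)=nG_n(\lfloor nx\rfloor)$. If $h_n\to h$ and $g_n\to g$ uniformly on every $[\varepsilon,\varepsilon']\subset(0,1)$ with $h,g$ continuous, and $f_n\to f$ uniformly on $[0,1]$ with $f$ continuous, then $f(0)=\mu$ and $f$ is differentiable on $(0,1)$ with $f'=-fh+g$. -/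

import Mathlib

open Filter Topology Set

namespace Stmt12Aux

open MeasureTheory

theorem step_int (n : ℕ) (hn : 0 < n) (j : ℕ) (ξ : ℕ → ℝ) :
    (∫ x in ((j:ℝ)/n)..(((j:ℝ)+1)/n), ξ ⌊(n:ℝ)*x⌋₊ = ξ j / n)
    ∧ IntervalIntegrable (fun x => ξ ⌊(n:ℝ)*x⌋₊) volume ((j:ℝ)/n) (((j:ℝ)+1)/n) := by
  have hn' : (0:ℝ) < n := by exact_mod_cast hn
  set c : ℝ := (j:ℝ)/n with hc
  set d : ℝ := ((j:ℝ)+1)/n with hd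
  have hle : c ≤ d := by
    rw [hc, hd, div_le_div_iff₀ hn' hn']
    nlinarith
  have hae : ∀ᵐ x ∂(volume : Measure ℝ), x ∈ Set.uIoc c d → (fun x => ξ ⌊(n:ℝ)*x⌋₊) x = ξ j := by
    have h0 : ∀ᵐ x : ℝ, x ≠ d := by
      rw [ae_iff]
      simpa using measure_singleton (μ := (volume : Measure ℝ)) d
    filter_upwards [h0] with x hx hxI
    rw [uIoc_of_le hle] at hxI
    have hxd : x < d := lt_of_le_of_ne hxI.2 hx
    have hcx := hxI.1
    rw [hc, div_lt_iff₀ hn'] at hcx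
    rw [hd, lt_div_iff₀ hn'] at hxd
    have h1 : (j:ℝ) ≤ n*x := by nlinarith
    have h2 : (n:ℝ)*x < j+1 := by nlinarith
    show ξ ⌊(n:ℝ)*x⌋₊ = ξ j
    congr 1
    rw [Nat.floor_eq_iff (le_trans (by positivity) h1)]
    exact ⟨h1, by exact_mod_cast h2⟩
  have heq : (fun x => ξ ⌊(n:ℝ)*x⌋₊) =ᶠ[ae ((volume : Measure ℝ).restrict (Set.uIoc c d))]
      (fun _ => ξ j) := (ae_restrict_iff' measurableSet_uIoc).mpr hae
  constructor
  · rw [intervalIntegral.integral_congr_ae hae, intervalIntegral.integral_const, smul_eq_mul,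
      hc, hd]
    field_simp
    ring
  · exact (intervalIntegrable_const (c := ξ j) (μ := volume)).congr_ae heq.symm

theorem telescope (Fn Gn Hn : ℕ → ℝ) (n : ℕ) (hn : 0 < n)
    (hrec : ∀ k, 1 ≤ k → k ≤ n → Fn k = Gn k + Hn k * Fn (k-1))
    (m : ℕ) : ∀ M, m ≤ M → M ≤ n →
    IntervalIntegrable (fun x => (n:ℝ) * Gn ⌊(n:ℝ)*x⌋₊ - (n:ℝ)*(1 - Hn ⌊(n:ℝ)*x⌋₊) * Fn (⌊(n:ℝ)*x⌋₊ - 1))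
      volume (((m:ℝ)+1)/n) (((M:ℝ)+1)/n)
    ∧ Fn M - Fn m = ∫ x in (((m:ℝ)+1)/n)..(((M:ℝ)+1)/n),
        ((n:ℝ) * Gn ⌊(n:ℝ)*x⌋₊ - (n:ℝ)*(1 - Hn ⌊(n:ℝ)*x⌋₊) * Fn (⌊(n:ℝ)*x⌋₊ - 1)) := by
  have hn' : (0:ℝ) < n := by exact_mod_cast hn
  set ξ : ℕ → ℝ := fun k => (n:ℝ) * Gn k - (n:ℝ)*(1 - Hn k) * Fn (k-1) with hξ
  intro M
  induction M with
  | zero =>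
    intro hm _
    have hm0 : m = 0 := Nat.le_zero.mp hm
    subst hm0
    exact ⟨IntervalIntegrable.refl, by simp⟩
  | succ M ih =>
    intro hm hMn
    rcases Nat.lt_or_ge m (M+1) with hlt | hge
    · have hmM : m ≤ M := Nat.lt_succ_iff.mp hlt
      have hMn' : M ≤ n := le_trans (Nat.le_succ M) hMn
      obtain ⟨ihint, iheq⟩ := ih hmM hMn'
      have hstep := step_int n hn (M+1) ξ
      have hc1 : (((M+1:ℕ)):ℝ)/(n:ℝ) = ((M:ℝ)+1)/n := by push_cast; ring_nf
      rw [hc1] at hstep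
      constructor
      · exact ihint.trans hstep.2
      · have hadd := intervalIntegral.integral_add_adjacent_intervals ihint hstep.2
        have hrecM := hrec (M+1) (Nat.succ_le_succ (Nat.zero_le M)) hMn
        have hsub : (M+1) - 1 = M := rfl
        rw [hsub] at hrecM
        have hξval : ξ (M+1) / n = Gn (M+1) - (1 - Hn (M+1)) * Fn M := by
          rw [hξ]; simp only [hsub]
          field_simp
        have hkey : Fn (M+1) - Fn m = (Fn M - Fn m) + ξ (M+1)/n := by
          rw [hξval, hrecM]; ring
        rw [hkey, iheq, ← hstep.1, hadd]
    · have hm1 : m = M + 1 := le_antisymm hm hge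
      subst hm1
      exact ⟨IntervalIntegrable.refl, by simp⟩

set_option maxHeartbeats 1000000 in
theorem key_identity
    (F G H : ℕ → ℕ → ℝ) (f g h : ℝ → ℝ)
    (hrec : ∀ n : ℕ, ∀ k, 1 ≤ k → k ≤ n → F n k = G n k + H n k * F n (k - 1))
    (hgconv : ∀ ε ε' : ℝ, 0 < ε → ε < ε' → ε' < 1 →
      TendstoUniformlyOn (fun (n : ℕ) (x : ℝ) => (n : ℝ) * G n ⌊(n : ℝ) * x⌋₊) g atTop (Set.Icc ε ε'))
    (hhconv : ∀ ε ε' : ℝ, 0 < ε → ε < ε' → ε' < 1 →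
      TendstoUniformlyOn (fun (n : ℕ) (x : ℝ) => (n : ℝ) * (1 - H n ⌊(n : ℝ) * x⌋₊)) h atTop
        (Set.Icc ε ε'))
    (hg : ContinuousOn g (Set.Ioo 0 1)) (hh : ContinuousOn h (Set.Ioo 0 1))
    (hfconv : TendstoUniformlyOn (fun (n : ℕ) (x : ℝ) => F n ⌊(n : ℝ) * x⌋₊) f atTop (Set.Icc 0 1))
    (hf : ContinuousOn f (Set.Icc 0 1)) :
    ∀ a b : ℝ, a ∈ Set.Ioo (0:ℝ) 1 → b ∈ Set.Ioo (0:ℝ) 1 → a < b →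
      f b - f a = ∫ x in a..b, (g x - h x * f x) := by
  set φ : ℝ → ℝ := fun x => g x - h x * f x with hφ
  have hφc : ContinuousOn φ (Set.Ioo 0 1) :=
    hg.sub (hh.mul (hf.mono Ioo_subset_Icc_self))
  intro a b ha hb hab
  obtain ⟨ha0, ha1⟩ := ha
  obtain ⟨hb0, hb1⟩ := hb
  set s : Set ℝ := Set.Icc (a/2) ((1+b)/2) with hs
  have hs1 : (0:ℝ) < a/2 := by linarith
  have hs2 : a/2 < (1+b)/2 := by linarith
  have hs3 : (1+b)/2 < 1 := by linarith
  have hssub : s ⊆ Set.Ioo 0 1 := fun x hx => ⟨lt_of_lt_of_le hs1 hx.1, lt_of_le_of_lt hx.2 hs3⟩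
  have hscomp : IsCompact s := isCompact_Icc
  -- bound for φ on s
  obtain ⟨C, hC⟩ := hscomp.exists_bound_of_continuousOn (hφc.mono hssub)
  have hC0 : 0 ≤ C := le_trans (norm_nonneg _) (hC (a/2) ⟨le_refl _, le_of_lt hs2⟩)
  -- bound for f on Icc 0 1
  obtain ⟨Cf, hCf⟩ := (isCompact_Icc (a := (0:ℝ)) (b := 1)).exists_bound_of_continuousOn hf
  have hCf0 : 0 ≤ Cf := le_trans (norm_nonneg _) (hCf 0 (by norm_num))
  -- bound for h on s
  obtain ⟨Ch, hCh⟩ := hscomp.exists_bound_of_continuousOn (hh.mono hssub)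
  have hCh0 : 0 ≤ Ch := le_trans (norm_nonneg _) (hCh (a/2) ⟨le_refl _, le_of_lt hs2⟩)
  -- shifted uniform convergence of F n (⌊n x⌋ - 1) towards f on s
  have hFshift : ∀ δ : ℝ, 0 < δ → ∀ᶠ n : ℕ in atTop,
      ∀ x ∈ s, dist (f x) (F n (⌊(n:ℝ)*x⌋₊ - 1)) < δ := by
    intro δ hδ
    have hUC : UniformContinuousOn f (Set.Icc 0 1) :=
      isCompact_Icc.uniformContinuousOn_of_continuous hf
    rw [Metric.uniformContinuousOn_iff] at hUC
    obtain ⟨η, hη, hUC⟩ := hUC (δ/2) (by positivity)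
    have e1 := (Metric.tendstoUniformlyOn_iff.mp hfconv) (δ/2) (by positivity)
    have e2 : ∀ᶠ n : ℕ in atTop, (2/a : ℝ) ≤ n :=
      tendsto_natCast_atTop_atTop.eventually_ge_atTop (2/a)
    have e3 : ∀ᶠ n : ℕ in atTop, (1/η : ℝ) < n :=
      tendsto_natCast_atTop_atTop.eventually_gt_atTop (1/η)
    filter_upwards [e1, e2, e3] with n h1 h2a h3 x hx
    have hn' : (0:ℝ) < n := lt_of_lt_of_le (by positivity) h2a
    have h1n : 1/(n:ℝ) ≤ a/2 := by
      rw [div_le_div_iff₀ hn' (by norm_num)]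
      rw [div_le_iff₀ ha0] at h2a
      nlinarith
    set y := x - 1/(n:ℝ) with hy
    have hxs := hx
    obtain ⟨hxl, hxr⟩ := hxs
    have hy0 : 0 ≤ y := by rw [hy]; linarith
    have hy1 : y ≤ 1 := by
      have h1npos : (0:ℝ) < 1/(n:ℝ) := by positivity
      rw [hy]; linarith
    have hx01 : x ∈ Set.Icc (0:ℝ) 1 := ⟨by linarith, by linarith⟩
    have hy01 : y ∈ Set.Icc (0:ℝ) 1 := ⟨hy0, hy1⟩
    have hny : (n:ℝ)*y = (n:ℝ)*x - 1 := by
      rw [hy, mul_sub, mul_one_div, div_self (ne_of_gt hn')]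
    have hfl : ⌊(n:ℝ)*y⌋₊ = ⌊(n:ℝ)*x⌋₊ - 1 := by
      rw [hny, Nat.floor_sub_one]
    have hdxy : dist x y < η := by
      rw [Real.dist_eq, hy]
      have he : x - (x - 1/(n:ℝ)) = 1/(n:ℝ) := by ring
      rw [he, abs_of_pos (by positivity), div_lt_iff₀ hn']
      rw [div_lt_iff₀ hη] at h3
      nlinarith
    have hd1 : dist (f x) (f y) < δ/2 := hUC x hx01 y hy01 hdxy
    have hd2 : dist (f y) (F n ⌊(n:ℝ)*y⌋₊) < δ/2 := h1 y hy01
    rw [hfl] at hd2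
    calc dist (f x) (F n (⌊(n:ℝ)*x⌋₊ - 1))
        ≤ dist (f x) (f y) + dist (f y) (F n (⌊(n:ℝ)*x⌋₊ - 1)) := dist_triangle _ _ _
      _ < δ/2 + δ/2 := by exact add_lt_add hd1 hd2
      _ = δ := by ring
  -- eventual bound for F n (⌊n x⌋-1)
  have hFbdd : ∀ᶠ n : ℕ in atTop, ∀ x ∈ s, |F n (⌊(n:ℝ)*x⌋₊ - 1)| ≤ Cf + 1 := by
    filter_upwards [hFshift 1 one_pos] with n h1 x hx
    have := h1 x hx
    rw [Real.dist_eq] at this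
    have hfx : |f x| ≤ Cf := hCf x ((Ioo_subset_Icc_self) (hssub hx))
    calc |F n (⌊(n:ℝ)*x⌋₊ - 1)| = |f x - (f x - F n (⌊(n:ℝ)*x⌋₊ - 1))| := by ring_nf
      _ ≤ |f x| + |f x - F n (⌊(n:ℝ)*x⌋₊ - 1)| := abs_sub _ _
      _ ≤ Cf + 1 := by exact add_le_add hfx (le_of_lt this)
  -- uniform convergence of the step integrand ψ towards φ on s
  have hup : ∀ δ : ℝ, 0 < δ → ∀ᶠ n : ℕ in atTop, ∀ x ∈ s,
      |((n:ℝ) * G n ⌊(n:ℝ)*x⌋₊ - (n:ℝ)*(1 - H n ⌊(n:ℝ)*x⌋₊) * F n (⌊(n:ℝ)*x⌋₊ - 1)) - φ x|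
        < δ := by
    intro δ hδ
    have hδ1 : (0:ℝ) < δ/(3*(Cf+2)) := by positivity
    have hδ3 : (0:ℝ) < δ/(3*(Ch+1)) := by positivity
    have e_g := (Metric.tendstoUniformlyOn_iff.mp (hgconv (a/2) ((1+b)/2) hs1 hs2 hs3))
      (δ/3) (by positivity)
    have e_h := (Metric.tendstoUniformlyOn_iff.mp (hhconv (a/2) ((1+b)/2) hs1 hs2 hs3))
      (δ/(3*(Cf+2))) hδ1
    have e_F := hFshift (δ/(3*(Ch+1))) hδ3
    filter_upwards [e_g, e_h, e_F, hFbdd] with n hg' hh' hF' hFb x hx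
    have hxIoo := hssub hx
    have A1 : |(n:ℝ) * G n ⌊(n:ℝ)*x⌋₊ - g x| < δ/3 := by
      have := hg' x hx; rw [Real.dist_eq] at this
      rwa [abs_sub_comm]
    have A2 : |(n:ℝ)*(1 - H n ⌊(n:ℝ)*x⌋₊) - h x| < δ/(3*(Cf+2)) := by
      have := hh' x hx; rw [Real.dist_eq] at this
      rwa [abs_sub_comm]
    have A3 : |F n (⌊(n:ℝ)*x⌋₊ - 1) - f x| < δ/(3*(Ch+1)) := by
      have := hF' x hx; rw [Real.dist_eq] at this
      rwa [abs_sub_comm]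
    have B2 : |F n (⌊(n:ℝ)*x⌋₊ - 1)| ≤ Cf + 1 := hFb x hx
    have B3 : |h x| ≤ Ch := hCh x hx
    set gn := (n:ℝ) * G n ⌊(n:ℝ)*x⌋₊
    set hn := (n:ℝ)*(1 - H n ⌊(n:ℝ)*x⌋₊)
    set Fp := F n (⌊(n:ℝ)*x⌋₊ - 1)
    have hsplit : gn - hn * Fp - φ x
        = (gn - g x) - ((hn - h x) * Fp + h x * (Fp - f x)) := by
      rw [hφ]; ring
    have hb1 : |gn - hn * Fp - φ x|
        ≤ |gn - g x| + (|hn - h x| * |Fp| + |h x| * |Fp - f x|) := by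
      rw [hsplit]
      calc |(gn - g x) - ((hn - h x) * Fp + h x * (Fp - f x))|
          ≤ |gn - g x| + |(hn - h x) * Fp + h x * (Fp - f x)| := abs_sub _ _
        _ ≤ |gn - g x| + (|(hn - h x) * Fp| + |h x * (Fp - f x)|) := by
            exact add_le_add le_rfl (abs_add_le _ _)
        _ = |gn - g x| + (|hn - h x| * |Fp| + |h x| * |Fp - f x|) := by
            rw [abs_mul, abs_mul]
    have t2 : |hn - h x| * |Fp| ≤ (δ/(3*(Cf+2))) * (Cf + 1) :=
      mul_le_mul (le_of_lt A2) B2 (abs_nonneg _) (le_of_lt hδ1)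
    have t3 : |h x| * |Fp - f x| ≤ Ch * (δ/(3*(Ch+1))) :=
      mul_le_mul B3 (le_of_lt A3) (abs_nonneg _) hCh0
    have t2' : (δ/(3*(Cf+2))) * (Cf + 1) < δ/3 := by
      rw [div_mul_eq_mul_div, div_lt_div_iff₀ (by positivity) (by norm_num)]
      nlinarith
    have t3' : Ch * (δ/(3*(Ch+1))) < δ/3 := by
      rw [mul_div_assoc']  -- Ch * δ / (3(Ch+1))
      rw [div_lt_div_iff₀ (by positivity) (by norm_num)]
      nlinarith
    linarith
  -- the sequence tends to the integral
  have hL : Tendsto (fun n : ℕ => F n ⌊(n:ℝ)*b⌋₊ - F n ⌊(n:ℝ)*a⌋₊) atTop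
      (𝓝 (∫ x in a..b, φ x)) := by
    rw [Metric.tendsto_nhds]
    intro ε hε
    have hba : (0:ℝ) < b - a + 1 := by linarith
    set ε' := ε/(2*(b-a+1)) with hε'
    have hε'0 : 0 < ε' := by positivity
    have ev1 := hup ε' hε'0
    have ev2 : ∀ᶠ n : ℕ in atTop, (2*C)/(n:ℝ) < ε/2 :=
      (tendsto_const_div_atTop_nhds_zero_nat (2*C)).eventually_lt_const (by positivity)
    have ev3 : ∀ᶠ n : ℕ in atTop, (2/a : ℝ) ≤ n :=
      tendsto_natCast_atTop_atTop.eventually_ge_atTop (2/a)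
    have ev4 : ∀ᶠ n : ℕ in atTop, (2/(1-b) : ℝ) ≤ n :=
      tendsto_natCast_atTop_atTop.eventually_ge_atTop (2/(1-b))
    filter_upwards [ev1, ev2, ev3, ev4] with n h1 h2 h3 h4
    have hn' : (0:ℝ) < n := lt_of_lt_of_le (by positivity) h3
    have hn0 : 0 < n := by exact_mod_cast hn'
    have h1na : 1/(n:ℝ) ≤ a/2 := by
      rw [div_le_div_iff₀ hn' (by norm_num)]
      rw [div_le_iff₀ ha0] at h3
      nlinarith
    have h1nb : 1/(n:ℝ) ≤ (1-b)/2 := by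
      rw [div_le_div_iff₀ hn' (by norm_num)]
      rw [div_le_iff₀ (by linarith : (0:ℝ) < 1 - b)] at h4
      nlinarith
    set m := ⌊(n:ℝ)*a⌋₊ with hm
    set M := ⌊(n:ℝ)*b⌋₊ with hM
    have hmM : m ≤ M :=
      Nat.floor_le_floor (mul_le_mul_of_nonneg_left (le_of_lt hab) (le_of_lt hn'))
    have hMn : M ≤ n := by
      rw [hM]
      calc ⌊(n:ℝ)*b⌋₊ ≤ ⌊(n:ℝ)⌋₊ := Nat.floor_le_floor
            (by nlinarith [le_of_lt hb1, le_of_lt hn'])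
        _ = n := Nat.floor_natCast n
    obtain ⟨hint, heq⟩ := Stmt12Aux.telescope (F n) (G n) (H n) n hn0
      (fun k h1 h2 => hrec n k h1 h2) m M hmM hMn
    set u := (((m:ℕ):ℝ)+1)/(n:ℝ) with hu
    set v := (((M:ℕ):ℝ)+1)/(n:ℝ) with hv
    -- position of u and v
    have hau : a < u := by
      rw [hu, lt_div_iff₀ hn']
      have := Nat.lt_floor_add_one ((n:ℝ)*a)
      rw [← hm] at this
      linarith [this]
    have hua : u ≤ a + 1/(n:ℝ) := by
      rw [hu, div_le_iff₀ hn']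
      have := Nat.floor_le (by nlinarith : (0:ℝ) ≤ (n:ℝ)*a)
      rw [← hm] at this
      have : (m:ℝ) ≤ (n:ℝ)*a := this
      field_simp
      nlinarith
    have hbv : b < v := by
      rw [hv, lt_div_iff₀ hn']
      have := Nat.lt_floor_add_one ((n:ℝ)*b)
      rw [← hM] at this
      linarith [this]
    have hvb : v ≤ b + 1/(n:ℝ) := by
      rw [hv, div_le_iff₀ hn']
      have := Nat.floor_le (by nlinarith : (0:ℝ) ≤ (n:ℝ)*b)
      rw [← hM] at this
      have : (M:ℝ) ≤ (n:ℝ)*b := this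
      field_simp
      nlinarith
    have huv : u ≤ v := by
      rw [hu, hv, div_le_div_iff₀ hn' hn']
      have : (m:ℝ) ≤ (M:ℝ) := by exact_mod_cast hmM
      nlinarith
    have hus : u ∈ s := ⟨by linarith, by linarith⟩
    have hvs : v ∈ s := ⟨by linarith, by linarith⟩
    have has : a ∈ s := ⟨by linarith, by linarith⟩
    have hbs : b ∈ s := ⟨by linarith, by linarith⟩
    -- interval integrability of φ on subintervals of s
    have hφint : ∀ p q : ℝ, p ∈ s → q ∈ s → IntervalIntegrable φ volume p q := by
      intro p q hp hq
      apply ContinuousOn.intervalIntegrable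
      apply (hφc.mono hssub).mono
      intro z hz
      rcases le_total p q with hpq | hpq
      · rw [uIcc_of_le hpq] at hz
        exact ⟨le_trans hp.1 hz.1, le_trans hz.2 hq.2⟩
      · rw [uIcc_of_ge hpq] at hz
        exact ⟨le_trans hq.1 hz.1, le_trans hz.2 hp.2⟩
    -- split the difference of integrals
    set ψ : ℝ → ℝ := fun x =>
      (n:ℝ) * G n ⌊(n:ℝ)*x⌋₊ - (n:ℝ)*(1 - H n ⌊(n:ℝ)*x⌋₊) * F n (⌊(n:ℝ)*x⌋₊ - 1) with hψ
    have hsplit1 : (∫ x in u..b, φ x) + (∫ x in b..v, φ x) = ∫ x in u..v, φ x :=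
      intervalIntegral.integral_add_adjacent_intervals (hφint u b hus hbs) (hφint b v hbs hvs)
    have hsplit2 : (∫ x in a..u, φ x) + (∫ x in u..b, φ x) = ∫ x in a..b, φ x :=
      intervalIntegral.integral_add_adjacent_intervals (hφint a u has hus) (hφint u b hus hbs)
    have hdiffint : (∫ x in u..v, ψ x) - (∫ x in u..v, φ x) = ∫ x in u..v, (ψ x - φ x) :=
      (intervalIntegral.integral_sub hint (hφint u v hus hvs)).symm
    -- bound |∫_u^v (ψ - φ)|
    have hIuv : Set.uIoc u v ⊆ s := by
      rw [uIoc_of_le huv]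
      intro z hz
      exact ⟨le_trans hus.1 (le_of_lt hz.1), le_trans hz.2 hvs.2⟩
    have hbound1 : |∫ x in u..v, (ψ x - φ x)| ≤ ε' * |v - u| := by
      rw [← Real.norm_eq_abs]
      apply intervalIntegral.norm_integral_le_of_norm_le_const
      intro z hz
      rw [Real.norm_eq_abs]
      exact le_of_lt (h1 z (hIuv hz))
    have hbound2 : |∫ x in b..v, φ x| ≤ C * |v - b| := by
      rw [← Real.norm_eq_abs]
      apply intervalIntegral.norm_integral_le_of_norm_le_const
      intro z hz
      rw [uIoc_of_le (le_of_lt hbv)] at hz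
      exact hC z ⟨le_trans hbs.1 (le_of_lt hz.1), le_trans hz.2 hvs.2⟩
    have hbound3 : |∫ x in a..u, φ x| ≤ C * |u - a| := by
      rw [← Real.norm_eq_abs]
      apply intervalIntegral.norm_integral_le_of_norm_le_const
      intro z hz
      rw [uIoc_of_le (le_of_lt hau)] at hz
      exact hC z ⟨le_trans has.1 (le_of_lt hz.1), le_trans hz.2 hus.2⟩
    have hvu : |v - u| ≤ b - a + 1/(n:ℝ) := by
      rw [abs_of_nonneg (by linarith)]
      linarith
    have hvb' : |v - b| ≤ 1/(n:ℝ) := by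
      rw [abs_of_nonneg (by linarith)]
      linarith
    have hua' : |u - a| ≤ 1/(n:ℝ) := by
      rw [abs_of_nonneg (by linarith)]
      linarith
    -- final estimate
    rw [Real.dist_eq, heq]
    have hdecomp : (∫ x in u..v, ψ x) - (∫ x in a..b, φ x)
        = (∫ x in u..v, (ψ x - φ x)) + ((∫ x in b..v, φ x) - (∫ x in a..u, φ x)) := by
      rw [← hdiffint, ← hsplit1, ← hsplit2]; ring
    rw [hdecomp]
    have est1 : |∫ x in u..v, (ψ x - φ x)| ≤ ε/2 := by
      calc |∫ x in u..v, (ψ x - φ x)| ≤ ε' * |v - u| := hbound1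
        _ ≤ ε' * (b - a + 1) := by
            apply mul_le_mul_of_nonneg_left ?_ (le_of_lt hε'0)
            have h1n1 : 1/(n:ℝ) ≤ 1 := by
              rw [div_le_one hn']
              exact_mod_cast Nat.one_le_cast.mpr hn0
            linarith
        _ = ε/2 := by rw [hε']; field_simp
    have est2 : |(∫ x in b..v, φ x) - (∫ x in a..u, φ x)| < ε/2 := by
      calc |(∫ x in b..v, φ x) - (∫ x in a..u, φ x)|
          ≤ |∫ x in b..v, φ x| + |∫ x in a..u, φ x| := abs_sub _ _
        _ ≤ C * (1/(n:ℝ)) + C * (1/(n:ℝ)) := by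
            refine add_le_add (le_trans hbound2 ?_) (le_trans hbound3 ?_)
            · exact mul_le_mul_of_nonneg_left hvb' hC0
            · exact mul_le_mul_of_nonneg_left hua' hC0
        _ = (2*C)/(n:ℝ) := by ring
        _ < ε/2 := h2
    calc |(∫ x in u..v, (ψ x - φ x)) + ((∫ x in b..v, φ x) - (∫ x in a..u, φ x))|
        ≤ |∫ x in u..v, (ψ x - φ x)| + |(∫ x in b..v, φ x) - (∫ x in a..u, φ x)| :=
          abs_add_le _ _
      _ < ε/2 + ε/2 := by exact add_lt_add_of_le_of_lt est1 est2
      _ = ε := by ring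
  -- the sequence also tends to f b - f a
  have hL2 : Tendsto (fun n : ℕ => F n ⌊(n:ℝ)*b⌋₊ - F n ⌊(n:ℝ)*a⌋₊) atTop
      (𝓝 (f b - f a)) := by
    exact (hfconv.tendsto_at ⟨le_of_lt hb0, le_of_lt hb1⟩).sub
      (hfconv.tendsto_at ⟨le_of_lt ha0, le_of_lt ha1⟩)
  exact tendsto_nhds_unique hL2 hL


end Stmt12Aux

open MeasureTheory in
theorem stmt_12
    (F G H : ℕ → ℕ → ℝ) (μ : ℝ) (f g h : ℝ → ℝ)
    (hrec : ∀ n : ℕ, ∀ k, 1 ≤ k → k ≤ n → F n k = G n k + H n k * F n (k - 1))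
    (hterm : ∀ n : ℕ, F n 0 = μ)
    (hgconv : ∀ ε ε' : ℝ, 0 < ε → ε < ε' → ε' < 1 →
      TendstoUniformlyOn (fun (n : ℕ) (x : ℝ) => (n : ℝ) * G n ⌊(n : ℝ) * x⌋₊) g atTop (Set.Icc ε ε'))
    (hhconv : ∀ ε ε' : ℝ, 0 < ε → ε < ε' → ε' < 1 →
      TendstoUniformlyOn (fun (n : ℕ) (x : ℝ) => (n : ℝ) * (1 - H n ⌊(n : ℝ) * x⌋₊)) h atTop
        (Set.Icc ε ε'))
    (hg : ContinuousOn g (Set.Ioo 0 1)) (hh : ContinuousOn h (Set.Ioo 0 1))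
    (hfconv : TendstoUniformlyOn (fun (n : ℕ) (x : ℝ) => F n ⌊(n : ℝ) * x⌋₊) f atTop (Set.Icc 0 1))
    (hf : ContinuousOn f (Set.Icc 0 1)) :
    f 0 = μ ∧ ∀ x ∈ Set.Ioo (0 : ℝ) 1, HasDerivAt f (-(f x * h x) + g x) x := by
  -- the integrand
  set φ : ℝ → ℝ := fun x => g x - h x * f x with hφ
  have hφc : ContinuousOn φ (Set.Ioo 0 1) :=
    hg.sub (hh.mul (hf.mono Ioo_subset_Icc_self))
  -- part 1 : f 0 = μ
  have hf0 : f 0 = μ := by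
    have h1 : Tendsto (fun n : ℕ => F n ⌊(n:ℝ) * 0⌋₊) atTop (𝓝 (f 0)) :=
      hfconv.tendsto_at (by constructor <;> norm_num)
    have h2 : (fun n : ℕ => F n ⌊(n:ℝ) * 0⌋₊) = fun n => μ := by
      funext n; simpa using hterm n
    rw [h2] at h1
    exact (tendsto_const_nhds_iff.mp h1).symm
  refine ⟨hf0, ?_⟩
  -- the key integral identity
  have key : ∀ a b : ℝ, a ∈ Set.Ioo (0:ℝ) 1 → b ∈ Set.Ioo (0:ℝ) 1 → a < b →
      f b - f a = ∫ x in a..b, φ x :=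
    Stmt12Aux.key_identity F G H f g h hrec hgconv hhconv hg hh hfconv hf
  -- from the key identity derive the derivative
  intro x hx
  obtain ⟨hx0, hx1⟩ := hx
  set a := x/2 with ha
  have haI : a ∈ Set.Ioo (0:ℝ) 1 := ⟨by linarith, by linarith⟩
  have hax : a < x := by rw [ha]; linarith
  have heqf : ∀ y ∈ Set.Ioo (0:ℝ) 1, f y = f a + ∫ t in a..y, φ t := by
    intro y hy
    rcases lt_trichotomy a y with hlt | heq | hgt
    · have := key a y haI hy hlt
      linarith
    · subst heq; simp
    · have := key y a hy haI hgt
      rw [intervalIntegral.integral_symm]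
      linarith
  have hmem : Set.Ioo (0:ℝ) 1 ∈ 𝓝 x := isOpen_Ioo.mem_nhds ⟨hx0, hx1⟩
  have hev : (fun y => f a + ∫ t in a..y, φ t) =ᶠ[𝓝 x] f := by
    filter_upwards [hmem] with y hy
    exact (heqf y hy).symm
  have hsub2 : Set.uIcc a x ⊆ Set.Ioo 0 1 := by
    rw [uIcc_of_le (le_of_lt hax)]
    intro z hz
    exact ⟨lt_of_lt_of_le haI.1 hz.1, lt_of_le_of_lt hz.2 hx1⟩
  have hint : IntervalIntegrable φ volume a x :=
    (hφc.mono hsub2).intervalIntegrable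
  have hmeas : StronglyMeasurableAtFilter φ (𝓝 x) volume :=
    hφc.stronglyMeasurableAtFilter isOpen_Ioo x ⟨hx0, hx1⟩
  have hcont : ContinuousAt φ x := hφc.continuousAt hmem
  have hder : HasDerivAt (fun y => f a + ∫ t in a..y, φ t) (φ x) x :=
    (intervalIntegral.integral_hasDerivAt_right hint hmeas hcont).const_add (f a)
  have : HasDerivAt f (φ x) x := hder.congr_of_eventuallyEq hev.symm
  have hval : φ x = -(f x * h x) + g x := by rw [hφ]; ring
  rwa [hval] at this
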